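/- Let S be a set and f : S^k → ℝ a nonnegative symmetric function of k arguments such that for all x₁,…,x_k ∈ S, f(x₁,x₂,x₃,…,x_k)² ≤ f(x₁,x₁,x₃,…,x_k)·f(x₂,x₂,x₃,…,x_k). Then for all x₁,…,x_k ∈ S, f(x₁,…,x_k)^k ≤ ∏_{j=1}^k f(x_j,x_j,…,x_j). -/

import Mathlib

open Finset Function

private lemma hessian_pos {S : Type*} (k : ℕ) (hk : 1 ≤ k) (f : (Fin k → S) → ℝ)
    (hpos : ∀ x : Fin k → S, 0 < f x)
    (hCS : ∀ (x : Fin k → S) (i j : Fin k), i ≠ j →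
      f x ^ 2 ≤ f (Function.update x j (x i)) * f (Function.update x i (x j)))
    (x : Fin k → S) :
    f x ^ k ≤ ∏ a : Fin k, f (fun _ => x a) := by
  classical
  set L : (Fin k → Fin k) → ℝ := fun v => Real.log (f (x ∘ v)) with hLdef
  set G : (Fin k → Fin k) → ℝ :=
    fun v => (k : ℝ) * L v - ∑ i : Fin k, L (fun _ => v i) with hGdef
  -- smoothing for L
  have hLs : ∀ (v : Fin k → Fin k) (i j : Fin k), i ≠ j →
      2 * L v ≤ L (update v j (v i)) + L (update v i (v j)) := by
    intro v i j hij
    have h := hCS (x ∘ v) i j hij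
    have h1 : x ∘ update v j (v i) = update (x ∘ v) j ((x ∘ v) i) :=
      Function.comp_update x v j (v i)
    have h2 : x ∘ update v i (v j) = update (x ∘ v) i ((x ∘ v) j) :=
      Function.comp_update x v i (v j)
    have hlog := Real.log_le_log (pow_pos (hpos _) 2) h
    rw [Real.log_pow, Real.log_mul (ne_of_gt (hpos _)) (ne_of_gt (hpos _))] at hlog
    simp only [hLdef, h1, h2]
    push_cast at hlog
    linarith
  -- baseline
  have hbase : ∀ (v : Fin k → Fin k) (j a : Fin k),
      ∑ l : Fin k, L (fun _ => (update v j a) l)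
        = L (fun _ => a) - L (fun _ => v j) + ∑ l : Fin k, L (fun _ => v l) := by
    intro v j a
    have hfe : (fun l => L (fun _ => update v j a l))
        = update (fun l => L (fun _ => v l)) j (L (fun _ => a)) := by
      funext l
      by_cases hl : l = j
      · subst hl; simp
      · simp [Function.update_of_ne hl]
    calc ∑ l : Fin k, L (fun _ => (update v j a) l)
        = ∑ l : Fin k, update (fun l => L (fun _ => v l)) j (L (fun _ => a)) l := by
          rw [hfe]
      _ = L (fun _ => a) + ∑ l ∈ univ \ {j}, L (fun _ => v l) :=
          Finset.sum_update_of_mem (mem_univ j) _ _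
      _ = L (fun _ => a) - L (fun _ => v j) + ∑ l : Fin k, L (fun _ => v l) := by
          rw [show (univ \ {j} : Finset (Fin k)) = univ.erase j from by
            ext l; simp [Finset.mem_erase, and_comm]]
          have := Finset.sum_erase_add univ (fun l => L (fun _ => v l)) (mem_univ j)
          linarith
  -- smoothing for G
  have hGs : ∀ (v : Fin k → Fin k) (i j : Fin k), i ≠ j →
      2 * G v ≤ G (update v j (v i)) + G (update v i (v j)) := by
    intro v i j hij
    have h := hLs v i j hij
    have b1 := hbase v j (v i)
    have b2 := hbase v i (v j)
    have hk0 : (0:ℝ) ≤ (k:ℝ) := by positivity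
    have hmul : (k:ℝ) * (2 * L v) ≤
        (k:ℝ) * (L (update v j (v i)) + L (update v i (v j))) :=
      mul_le_mul_of_nonneg_left h hk0
    simp only [hGdef]
    rw [b1, b2]
    nlinarith [hmul]
  -- counting
  set cnt : (Fin k → Fin k) → Fin k → ℤ :=
    fun v b => ((univ.filter (fun l => v l = b)).card : ℤ) with hcntdef
  set C : (Fin k → Fin k) → ℤ := fun v => ∑ b : Fin k, (cnt v b)^2 with hCdef
  have hcnt_upd : ∀ (v : Fin k → Fin k) (j a : Fin k), v j ≠ a → ∀ y,
      cnt (update v j a) y =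
        if y = a then cnt v y + 1 else if y = v j then cnt v y - 1 else cnt v y := by
    intro v j a hja y
    simp only [hcntdef]
    by_cases hy : y = a
    · subst hy
      rw [if_pos rfl]
      have hset : univ.filter (fun l => update v j y l = y)
          = insert j (univ.filter (fun l => v l = y)) := by
        ext l
        by_cases hl : l = j
        · subst hl; simp [hja]
        · simp [Function.update_of_ne hl, hl]
      rw [hset, Finset.card_insert_of_notMem (by simp [hja])]
      push_cast; ring
    · rw [if_neg hy]
      have hset : univ.filter (fun l => update v j a l = y)
          = (univ.filter (fun l => v l = y)).erase j := by
        ext l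
        by_cases hl : l = j
        · subst hl; simp [hy, Ne.symm hy]
        · simp [Function.update_of_ne hl, hl]
      rw [hset]
      by_cases hyb : y = v j
      · rw [if_pos hyb]
        rw [Finset.cast_card_erase_of_mem (by simp [hyb.symm])]
      · rw [if_neg hyb]
        rw [Finset.erase_eq_of_notMem (by simp; exact fun h => hyb h.symm)]
  have hCupd : ∀ (v : Fin k → Fin k) (i j : Fin k), v i ≠ v j →
      C (update v j (v i)) = C v + 2*(cnt v (v i) - cnt v (v j)) + 2 := by
    intro v i j hne
    have key := hcnt_upd v j (v i) (Ne.symm hne)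
    have hsum : ∑ y : Fin k, ((cnt (update v j (v i)) y)^2 - (cnt v y)^2)
        = ∑ y ∈ ({v i, v j} : Finset (Fin k)), ((cnt (update v j (v i)) y)^2 - (cnt v y)^2) := by
      refine (Finset.sum_subset (subset_univ _) ?_).symm
      intro y _ hy
      simp only [Finset.mem_insert, Finset.mem_singleton, not_or] at hy
      rw [key y, if_neg hy.1, if_neg hy.2]; ring
    rw [Finset.sum_pair hne] at hsum
    rw [key (v i), if_pos rfl, key (v j), if_neg (Ne.symm hne), if_pos rfl] at hsum
    have hCsub : C (update v j (v i)) - C v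
        = ∑ y : Fin k, ((cnt (update v j (v i)) y)^2 - (cnt v y)^2) := by
      simp only [hCdef]
      rw [Finset.sum_sub_distrib]
    rw [hsum] at hCsub
    linarith [hCsub]
  -- maximizer of G
  haveI : Nonempty (Fin k) := ⟨⟨0, hk⟩⟩
  obtain ⟨v₀, -, hv₀⟩ := Finset.exists_max_image univ G univ_nonempty
  set m := G v₀ with hm
  set T := univ.filter (fun v => G v = m) with hT
  have hTne : T.Nonempty := ⟨v₀, by simp [hT]; exact hm.symm⟩
  obtain ⟨w, hwT, hwmax⟩ := Finset.exists_max_image T C hTne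
  have hwG : G w = m := by simpa [hT] using hwT
  -- w is constant
  have hwconst : ∀ p q, w p = w q := by
    by_contra hcon
    push_neg at hcon
    obtain ⟨p0, q0, hpq⟩ := hcon
    obtain ⟨j, -, hj⟩ := Finset.exists_min_image univ (fun l => cnt w (w l)) univ_nonempty
    have hex : ∃ i, w i ≠ w j := by
      by_contra hno
      push_neg at hno
      exact hpq ((hno p0).trans (hno q0).symm)
    obtain ⟨i, hi⟩ := hex
    have hij : i ≠ j := fun e => hi (by rw [e])
    have h2G := hGs w i j hij
    have hle1 : G (update w j (w i)) ≤ m := hv₀ _ (mem_univ _)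
    have hle2 : G (update w i (w j)) ≤ m := hv₀ _ (mem_univ _)
    have hG1 : G (update w j (w i)) = m := by linarith [hwG ▸ h2G]
    have hmem1 : update w j (w i) ∈ T := by simp [hT, hG1]
    have hCle := hwmax _ hmem1
    have hCeq := hCupd w i j hi
    have hcnt_le := hj i (mem_univ i)
    omega
  -- m = 0
  have hm0 : m = 0 := by
    have j0 : Fin k := ⟨0, hk⟩
    have hwc : w = fun _ => w j0 := funext fun l => hwconst l j0
    have : G w = 0 := by
      simp only [hGdef]
      rw [hwc]
      simp [Finset.sum_const, Finset.card_univ, mul_comm]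
    rw [← hwG, this]
  -- conclude
  have hid : G id ≤ 0 := by rw [← hm0]; exact hv₀ _ (mem_univ _)
  have hGid : G id = (k:ℝ) * Real.log (f x) - ∑ i : Fin k, Real.log (f (fun _ => x i)) := by
    simp only [hGdef, hLdef]
    rw [Function.comp_id]
    rfl
  rw [hGid] at hid
  have hlog : Real.log (f x ^ k) ≤ Real.log (∏ a : Fin k, f (fun _ => x a)) := by
    rw [Real.log_pow, Real.log_prod (fun a _ => ne_of_gt (hpos _))]
    linarith
  have hp1 : (0:ℝ) < f x ^ k := pow_pos (hpos _) k
  have hp2 : (0:ℝ) < ∏ a : Fin k, f (fun _ => x a) :=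
    Finset.prod_pos fun a _ => hpos _
  exact (Real.log_le_log_iff hp1 hp2).mp hlog

/-- Abstract algebraic lemma: a nonnegative symmetric function of `k`
arguments satisfying a Cauchy–Schwarz type inequality in two of its arguments satisfies
`f(x₁,…,x_k)^k ≤ ∏ f(x_j,…,x_j)`. -/
theorem hessian_alg_lemma {S : Type*} (k : ℕ) (hk : 1 ≤ k) (f : (Fin k → S) → ℝ)
    (hnn : ∀ x : Fin k → S, 0 ≤ f x)
    (hsym : ∀ (σ : Equiv.Perm (Fin k)) (x : Fin k → S), f (x ∘ σ) = f x)
    (hCS : ∀ (x : Fin k → S) (i j : Fin k), i ≠ j →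
      f x ^ 2 ≤ f (Function.update x j (x i)) * f (Function.update x i (x j)))
    (x : Fin k → S) :
    f x ^ k ≤ ∏ a : Fin k, f (fun _ => x a) := by
  have key : ∀ ε : ℝ, 0 < ε → f x ^ k ≤ ∏ a : Fin k, (f (fun _ => x a) + ε) := by
    intro ε hε
    have hCS' : ∀ (y : Fin k → S) (i j : Fin k), i ≠ j →
        (f y + ε) ^ 2 ≤ (f (Function.update y j (y i)) + ε) * (f (Function.update y i (y j)) + ε) := by
      intro y i j hij
      have h := hCS y i j hij
      have h2 : 2 * f y ≤ f (Function.update y j (y i)) + f (Function.update y i (y j)) := by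
        nlinarith [hnn y, hnn (Function.update y j (y i)), hnn (Function.update y i (y j)),
          sq_nonneg (f (Function.update y j (y i)) - f (Function.update y i (y j)))]
      nlinarith [hε.le]
    have := hessian_pos k hk (fun y => f y + ε) (fun y => by linarith [hnn y]) hCS' x
    calc f x ^ k ≤ (f x + ε) ^ k := pow_le_pow_left₀ (hnn x) (by linarith) k
      _ ≤ ∏ a : Fin k, (f (fun _ => x a) + ε) := this
  have htend : Filter.Tendsto (fun ε : ℝ => ∏ a : Fin k, (f (fun _ => x a) + ε))
      (nhdsWithin 0 (Set.Ioi 0)) (nhds (∏ a : Fin k, f (fun _ => x a))) := by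
    have hc : Continuous (fun ε : ℝ => ∏ a : Fin k, (f (fun _ => x a) + ε)) := by
      exact continuous_finset_prod _ fun a _ => continuous_const.add continuous_id
    have := (hc.tendsto 0).mono_left (nhdsWithin_le_nhds (s := Set.Ioi (0:ℝ)))
    simpa using this
  exact ge_of_tendsto htend (Filter.eventually_of_mem self_mem_nhdsWithin
    fun ε hε => key ε hε)
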